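/- Let $f$ be a probability density on $\mathbb{R}^n$ with differential entropy $h(X^n)$ (in bits). Then the erosion entropy of the positive strict hypograph of $f$ by the vertical unit segment satisfies $h_{\ominus \{0\}^n \times [0,1]}(\mathrm{hyp}_+ f) = h(X^n) + \log_2 e$. -/

import Mathlib

open MeasureTheory Set Pointwise

/-- Erosion of `A` by `B`: `{x | B + x ⊆ A}`. -/
def erode {n : ℕ} (A B : Set ((Fin n → ℝ) × ℝ)) : Set ((Fin n → ℝ) × ℝ) :=
  {x | ∀ b ∈ B, b + x ∈ A}

/-- Erosion entropy of `A` by `B` (in `ℝ^n × ℝ ≅ ℝ^(n+1)`). -/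
noncomputable def erosEnt {n : ℕ} (A B : Set ((Fin n → ℝ) × ℝ)) : ℝ :=
  ∫ t : ℝ, ((if 0 ≤ t then (1 : ℝ) else 0)
    - (volume (erode A ((2 : ℝ) ^ (-t) • B))).toReal / (volume A).toReal)

open MeasureTheory Set Real Filter

noncomputable def gA (a : ℝ) : ℝ → ℝ := fun t =>
  (if 0 ≤ t then a else 0) - max (a - Real.exp (-Real.log 2 * t)) 0

lemma L_pos : (0:ℝ) < Real.log 2 := Real.log_pos one_lt_two

lemma expInt (c : ℝ) :
    IntegrableOn (fun t => Real.exp (-Real.log 2 * t)) (Ioi c) :=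
  exp_neg_integrableOn_Ioi c L_pos

lemma expVal (c : ℝ) :
    ∫ t in Ioi c, Real.exp (-Real.log 2 * t)
      = Real.exp (-Real.log 2 * c) / Real.log 2 := by
  have hL := L_pos
  have hderiv : ∀ t ∈ Ici c,
      HasDerivAt (fun t => -(Real.exp (-Real.log 2 * t) / Real.log 2))
        (Real.exp (-Real.log 2 * t)) t := by
    intro t _
    have h1 : HasDerivAt (fun t : ℝ => -Real.log 2 * t) (-Real.log 2) t := by
      simpa using (hasDerivAt_id t).const_mul (-Real.log 2)
    have h2 := (Real.hasDerivAt_exp (-Real.log 2 * t)).comp t h1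
    have h3 := (h2.div_const (Real.log 2)).neg
    convert h3 using 1
    · rfl
    · rfl
    · rfl
    · field_simp
  have htend : Tendsto (fun t => -(Real.exp (-Real.log 2 * t) / Real.log 2))
      atTop (nhds 0) := by
    have h1 : Tendsto (fun t : ℝ => Real.log 2 * t) atTop atTop :=
      Tendsto.const_mul_atTop hL tendsto_id
    have h2 : Tendsto (fun t : ℝ => Real.exp (-(Real.log 2 * t))) atTop (nhds 0) :=
      Real.tendsto_exp_neg_atTop_nhds_zero.comp h1
    have h2' : Tendsto (fun t : ℝ => Real.exp (-Real.log 2 * t)) atTop (nhds 0) := by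
      simpa [neg_mul] using h2
    simpa using ((h2'.div_const (Real.log 2)).neg)
  have := integral_Ioi_of_hasDerivAt_of_tendsto' hderiv (expInt c) htend
  rw [this]; ring

lemma indDiff (a c : ℝ) (ha : 0 ≤ a) :
    Integrable (fun t => a * ((Ici (0:ℝ)).indicator 1 t - (Ioi c).indicator 1 t)) ∧
    (∫ t, a * ((Ici (0:ℝ)).indicator 1 t - (Ioi c).indicator 1 t)) = a * c ∧
    (∫ t, ‖a * ((Ici (0:ℝ)).indicator 1 t - (Ioi c).indicator 1 t)‖) = a * |c| := by
  rcases le_or_gt 0 c with hc | hc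
  · have he : ∀ t, a * ((Ici (0:ℝ)).indicator 1 t - (Ioi c).indicator 1 t)
        = (Icc (0:ℝ) c).indicator (fun _ => a) t := by
      intro t
      simp only [indicator_apply, mem_Ici, mem_Ioi, mem_Icc, Pi.one_apply, ite_and]
      split_ifs <;> (first | ring1 | linarith)
    have hi : Integrable ((Icc (0:ℝ) c).indicator (fun _ => a)) := by
      refine IntegrableOn.integrable_indicator ?_ measurableSet_Icc
      exact integrableOn_const (by simp [Real.volume_Icc])
    refine ⟨by simpa only [he] using hi, ?_, ?_⟩
    · simp only [he]
      rw [integral_indicator measurableSet_Icc]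
      simp [Real.volume_Icc, ENNReal.toReal_ofReal hc, mul_comm, hc]
    · simp only [he]
      have hn : ∀ t, ‖(Icc (0:ℝ) c).indicator (fun _ => a) t‖
          = (Icc (0:ℝ) c).indicator (fun _ => ‖a‖) t := by
        intro t; rw [← norm_indicator_eq_indicator_norm]
      simp only [hn]
      rw [integral_indicator measurableSet_Icc]
      simp [Real.volume_Icc, ENNReal.toReal_ofReal hc, abs_of_nonneg ha, abs_of_nonneg hc,
        mul_comm, hc]
  · have he : ∀ t, a * ((Ici (0:ℝ)).indicator 1 t - (Ioi c).indicator 1 t)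
        = (Ioo c (0:ℝ)).indicator (fun _ => -a) t := by
      intro t
      simp only [indicator_apply, mem_Ici, mem_Ioi, mem_Ioo, Pi.one_apply, ite_and]
      split_ifs <;> (first | ring1 | linarith)
    have hi : Integrable ((Ioo c (0:ℝ)).indicator (fun _ => -a)) := by
      refine IntegrableOn.integrable_indicator ?_ measurableSet_Ioo
      exact integrableOn_const (by simp [Real.volume_Ioo])
    refine ⟨by simpa only [he] using hi, ?_, ?_⟩
    · simp only [he]
      rw [integral_indicator measurableSet_Ioo]
      simp only [integral_const, smul_eq_mul, Measure.restrict_apply_univ]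
      rw [measureReal_restrict_apply_univ, Real.volume_real_Ioo, max_eq_left (by linarith)]
      ring
    · simp only [he]
      have hn : ∀ t, ‖(Ioo c (0:ℝ)).indicator (fun _ => -a) t‖
          = (Ioo c (0:ℝ)).indicator (fun _ => ‖-a‖) t := by
        intro t; rw [← norm_indicator_eq_indicator_norm]
      simp only [hn]
      rw [integral_indicator measurableSet_Ioo]
      simp only [integral_const, smul_eq_mul, Measure.restrict_apply_univ, norm_neg,
        Real.norm_eq_abs]
      rw [measureReal_restrict_apply_univ, Real.volume_real_Ioo, max_eq_left (by linarith)]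
      rw [abs_of_nonneg ha, abs_of_neg hc]; ring

lemma gA_zero : gA 0 = fun _ => (0:ℝ) := by
  funext t
  simp only [gA, ite_self]
  rw [max_eq_right (by simp [(Real.exp_pos _).le] : (0:ℝ) - Real.exp (-Real.log 2 * t) ≤ 0)]
  simp

lemma gA_decomp (a : ℝ) (ha : 0 < a) (t : ℝ) :
    gA a t = a * ((Ici (0:ℝ)).indicator 1 t
        - (Ioi (-Real.logb 2 a)).indicator 1 t)
      + (Ioi (-Real.logb 2 a)).indicator (fun t => Real.exp (-Real.log 2 * t)) t := by
  have hL := L_pos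
  have hkey : a ≤ Real.exp (-Real.log 2 * t) ↔ t ≤ -Real.logb 2 a := by
    rw [← Real.log_le_iff_le_exp ha, Real.logb, ← neg_div, le_div_iff₀ L_pos]
    constructor <;> intro h <;> linarith
  have hmax : max (a - Real.exp (-Real.log 2 * t)) 0
      = if -Real.logb 2 a < t then a - Real.exp (-Real.log 2 * t) else 0 := by
    split_ifs with h
    · exact max_eq_left (sub_nonneg.mpr (le_of_lt (not_le.mp (fun hh => absurd (hkey.mp hh) (not_le.mpr h)))))
    · exact max_eq_right (sub_nonpos.mpr (hkey.mpr (not_lt.mp h)))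
  simp only [gA, hmax, indicator_apply, mem_Ici, mem_Ioi, Pi.one_apply]
  split_ifs <;> ring

lemma gA_exp_eq (a : ℝ) (ha : 0 < a) :
    Real.exp (-Real.log 2 * -Real.logb 2 a) = a := by
  have : -Real.log 2 * -Real.logb 2 a = Real.log a := by
    rw [Real.logb]; field_simp
  rw [this, Real.exp_log ha]

lemma gA_main (a : ℝ) (ha : 0 ≤ a) :
    Integrable (gA a) ∧
    (∫ t, gA a t) = -(a * Real.logb 2 a) + a / Real.log 2 ∧
    (∫ t, ‖gA a t‖) ≤ ‖a * Real.logb 2 a‖ + a / Real.log 2 := by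
  rcases eq_or_lt_of_le ha with rfl | ha'
  · simp [gA_zero, integrable_zero, integral_zero]
  set c := -Real.logb 2 a with hc
  have h1 := indDiff a c ha
  have h2int : Integrable ((Ioi c).indicator (fun t => Real.exp (-Real.log 2 * t))) :=
    (expInt c).integrable_indicator measurableSet_Ioi
  have h2val : (∫ t, (Ioi c).indicator (fun t => Real.exp (-Real.log 2 * t)) t)
      = a / Real.log 2 := by
    rw [integral_indicator measurableSet_Ioi, expVal, gA_exp_eq a ha']
  have hfun : ∀ t, gA a t = a * ((Ici (0:ℝ)).indicator 1 t - (Ioi c).indicator 1 t)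
      + (Ioi c).indicator (fun t => Real.exp (-Real.log 2 * t)) t :=
    gA_decomp a ha'
  have hint : Integrable (gA a) := by
    have := h1.1.add h2int
    exact this.congr (by filter_upwards with t using (hfun t).symm)
  refine ⟨hint, ?_, ?_⟩
  · calc (∫ t, gA a t)
        = ∫ t, (a * ((Ici (0:ℝ)).indicator 1 t - (Ioi c).indicator 1 t)
            + (Ioi c).indicator (fun t => Real.exp (-Real.log 2 * t)) t) :=
          integral_congr_ae (by filter_upwards with t using hfun t)
      _ = a * c + a / Real.log 2 := by
          rw [integral_add h1.1 h2int, h1.2.1, h2val]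
      _ = -(a * Real.logb 2 a) + a / Real.log 2 := by rw [hc]; ring
  · have hmono : (∫ t, ‖gA a t‖)
        ≤ ∫ t, (‖a * ((Ici (0:ℝ)).indicator 1 t - (Ioi c).indicator 1 t)‖
            + ‖(Ioi c).indicator (fun t => Real.exp (-Real.log 2 * t)) t‖) := by
      refine integral_mono hint.norm (h1.1.norm.add h2int.norm) (fun t => ?_)
      rw [hfun t]; exact norm_add_le _ _
    have heq : (∫ t, (‖a * ((Ici (0:ℝ)).indicator 1 t - (Ioi c).indicator 1 t)‖
            + ‖(Ioi c).indicator (fun t => Real.exp (-Real.log 2 * t)) t‖))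
        = a * |c| + a / Real.log 2 := by
      rw [integral_add h1.1.norm h2int.norm, h1.2.2]
      congr 1
      have : ∀ t, ‖(Ioi c).indicator (fun t => Real.exp (-Real.log 2 * t)) t‖
          = (Ioi c).indicator (fun t => Real.exp (-Real.log 2 * t)) t := fun t =>
        Real.norm_of_nonneg (indicator_nonneg (fun s _ => (Real.exp_pos _).le) t)
      rw [integral_congr_ae (by filter_upwards with t using this t), h2val]
    have habs : a * |c| = ‖a * Real.logb 2 a‖ := by
      rw [Real.norm_eq_abs, abs_mul, abs_of_nonneg ha, hc, abs_neg]
    linarith [hmono, heq.le]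

theorem erosEnt_hypograph {n : ℕ} (f : (Fin n → ℝ) → ℝ)
    (hmeas : Measurable f) (hnn : ∀ x, 0 ≤ f x) (hpdf : ∫ x, f x = 1)
    (hint : Integrable (fun x => f x * Real.logb 2 (f x))) :
    erosEnt {p : (Fin n → ℝ) × ℝ | 0 < p.2 ∧ p.2 < f p.1}
        {p : (Fin n → ℝ) × ℝ | p.1 = 0 ∧ p.2 ∈ Icc (0 : ℝ) 1}
      = (-∫ x, f x * Real.logb 2 (f x)) + Real.logb 2 (Real.exp 1) := by
  set A : Set ((Fin n → ℝ) × ℝ) := {p | 0 < p.2 ∧ p.2 < f p.1} with hAdef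
  set B : Set ((Fin n → ℝ) × ℝ) := {p | p.1 = 0 ∧ p.2 ∈ Icc (0:ℝ) 1} with hBdef
  have hfi : Integrable f := by
    by_contra h
    rw [integral_undef h] at hpdf
    exact one_ne_zero hpdf.symm
  -- volume of A is 1
  have hA : volume A = 1 := by
    have hA_eq : A = regionBetween (fun _ => (0:ℝ)) f univ := by
      ext p
      simp [hAdef, regionBetween, mem_setOf_eq]
    rw [hA_eq, Measure.volume_eq_prod,
      volume_regionBetween_eq_lintegral' measurable_const hmeas MeasurableSet.univ,
      Measure.restrict_univ]
    simp only [Pi.sub_apply, sub_zero]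
    rw [← ofReal_integral_eq_lintegral_ofReal hfi (ae_of_all _ hnn), hpdf]
    simp
  -- erosion computation
  have herode : ∀ t : ℝ, erode A ((2:ℝ) ^ (-t) • B)
      = regionBetween (fun _ => (0:ℝ))
          (fun x => f x - Real.exp (-Real.log 2 * t)) univ := by
    intro t
    have hr : (2:ℝ) ^ (-t) = Real.exp (-Real.log 2 * t) := by
      rw [Real.rpow_def_of_pos two_pos, mul_neg, ← neg_mul]
    set s := Real.exp (-Real.log 2 * t) with hsdef
    have hs : 0 < s := Real.exp_pos _
    ext p
    simp only [erode, mem_setOf_eq, regionBetween, mem_univ, true_and, mem_Ioo]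
    constructor
    · intro h
      have hb0 : ((0 : Fin n → ℝ), (0:ℝ)) ∈ B := ⟨rfl, le_refl 0, zero_le_one⟩
      have hb1 : ((0 : Fin n → ℝ), (1:ℝ)) ∈ B := ⟨rfl, zero_le_one, le_refl 1⟩
      have h0 := h _ (smul_mem_smul_set (a := (2:ℝ) ^ (-t)) hb0)
      have h1 := h _ (smul_mem_smul_set (a := (2:ℝ) ^ (-t)) hb1)
      rw [show (2:ℝ) ^ (-t) • ((0 : Fin n → ℝ), (0:ℝ)) + p = p by
        simp [Prod.ext_iff, smul_eq_mul]] at h0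
      rw [show (2:ℝ) ^ (-t) • ((0 : Fin n → ℝ), (1:ℝ)) + p = (p.1, s + p.2) by
        simp [Prod.ext_iff, smul_eq_mul, hr]] at h1
      have h12 : s + p.2 < f p.1 := h1.2
      exact ⟨h0.1, by linarith⟩
    · rintro ⟨hp1, hp2⟩ b hb
      obtain ⟨q, hq, rfl⟩ := hb
      obtain ⟨hq1, hq2l, hq2r⟩ := hq
      have hb_eq : (2:ℝ) ^ (-t) • q + p = (p.1, s * q.2 + p.2) := by
        refine Prod.ext ?_ ?_
        · show (2:ℝ) ^ (-t) • q.1 + p.1 = p.1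
          rw [hq1, smul_zero, zero_add]
        · show (2:ℝ) ^ (-t) • q.2 + p.2 = s * q.2 + p.2
          rw [smul_eq_mul, hr]
      rw [hb_eq]
      have h2 : 0 ≤ s * q.2 := mul_nonneg hs.le hq2l
      have h3 : s * q.2 ≤ s := mul_le_of_le_one_right hs.le hq2r
      exact ⟨show (0:ℝ) < s * q.2 + p.2 by linarith,
        show s * q.2 + p.2 < f p.1 by linarith⟩
  -- integrability of the truncated density
  have hmint : ∀ s : ℝ, 0 < s → Integrable (fun x => max (f x - s) 0) := by
    intro s hs
    refine Integrable.mono hfi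
      ((hmeas.sub_const s).max measurable_const).aestronglyMeasurable
      (ae_of_all _ fun x => ?_)
    rw [Real.norm_eq_abs, Real.norm_eq_abs, abs_of_nonneg (le_max_right _ _),
      abs_of_nonneg (hnn x)]
    exact max_le (by linarith [hnn x]) (hnn x)
  -- volume of erosion
  have hvol : ∀ t : ℝ, (volume (erode A ((2:ℝ) ^ (-t) • B))).toReal
      = ∫ x, max (f x - Real.exp (-Real.log 2 * t)) 0 := by
    intro t
    set s := Real.exp (-Real.log 2 * t) with hsdef
    have hs : 0 < s := Real.exp_pos _
    rw [herode t, Measure.volume_eq_prod,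
      volume_regionBetween_eq_lintegral' measurable_const (hmeas.sub_const s)
        MeasurableSet.univ,
      Measure.restrict_univ]
    simp only [Pi.sub_apply, sub_zero]
    have h1 : ∀ y, ENNReal.ofReal (f y - s)
        = ENNReal.ofReal (max (f y - s) 0) := by
      intro y
      rcases le_total (f y - s) 0 with h | h
      · simp [max_eq_right h, ENNReal.ofReal_of_nonpos h]
      · rw [max_eq_left h]
    rw [lintegral_congr h1,
      ← ofReal_integral_eq_lintegral_ofReal (hmint s hs)
        (ae_of_all _ fun x => le_max_right _ _)]
    exact ENNReal.toReal_ofReal (integral_nonneg (fun x => le_max_right _ _))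
  -- rewrite erosEnt as a double integral of gA
  have hQ : erosEnt A B = ∫ t : ℝ, ∫ x, gA (f x) t := by
    unfold erosEnt
    refine integral_congr_ae (ae_of_all _ fun t => ?_)
    rw [hA]
    simp only [ENNReal.toReal_one, div_one]
    rw [hvol t]
    have hif_int : Integrable (fun x => if 0 ≤ t then f x else 0) := by
      split_ifs
      · exact hfi
      · exact integrable_zero _ _ _
    have hif : (if 0 ≤ t then (1:ℝ) else 0) = ∫ x, (if 0 ≤ t then f x else 0) := by
      split_ifs
      · exact hpdf.symm
      · simp
    rw [hif, ← integral_sub hif_int (hmint _ (Real.exp_pos _))]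
    rfl
  -- Fubini
  have hQmeas : Measurable (fun p : ℝ × (Fin n → ℝ) => gA (f p.2) p.1) := by
    have h1 : Measurable (fun p : ℝ × (Fin n → ℝ) => if 0 ≤ p.1 then f p.2 else 0) :=
      Measurable.ite (measurableSet_le measurable_const measurable_fst)
        (hmeas.comp measurable_snd) measurable_const
    have h2 : Measurable (fun p : ℝ × (Fin n → ℝ) =>
        max (f p.2 - Real.exp (-Real.log 2 * p.1)) 0) :=
      ((hmeas.comp measurable_snd).sub
        (Real.measurable_exp.comp (measurable_fst.const_mul (-Real.log 2)))).max
        measurable_const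
    exact h1.sub h2
  have hQint : Integrable (Function.uncurry fun (t : ℝ) (x : Fin n → ℝ) => gA (f x) t)
      ((volume : Measure ℝ).prod volume) := by
    refine (integrable_prod_iff' hQmeas.aestronglyMeasurable).mpr ⟨?_, ?_⟩
    · exact ae_of_all _ (fun x => (gA_main (f x) (hnn x)).1)
    · refine Integrable.mono' (hint.norm.add (hfi.div_const (Real.log 2)))
        ((hQmeas.norm.stronglyMeasurable.integral_prod_left').aestronglyMeasurable)
        (ae_of_all _ fun x => ?_)
      rw [Real.norm_of_nonneg (integral_nonneg (fun t => norm_nonneg _))]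
      exact (gA_main (f x) (hnn x)).2.2
  rw [hQ, integral_integral_swap hQint]
  have hfin : ∀ x, (∫ t, gA (f x) t)
      = -(f x * Real.logb 2 (f x)) + f x / Real.log 2 := fun x =>
    (gA_main (f x) (hnn x)).2.1
  rw [integral_congr_ae (ae_of_all _ hfin)]
  rw [integral_add (f := fun a => -(f a * Real.logb 2 (f a)))
    (g := fun a => f a / Real.log 2) hint.neg (hfi.div_const _),
    integral_neg, integral_div, hpdf]
  congr 1
  rw [Real.logb, Real.log_exp]
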